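/- arXiv:1702.04303 — 3 statements merged into one kernel-verified Lean document; each statement's English description precedes it below -/
import Mathlib

section
/- Let X ∈ ℝ^{n×p} with X^T X = I, G ∈ ℝ^{n×p}, A := G X^T − X G^T, and ∇F₁ := G − X G^T X. Then ∇F₁ = 0 if and only if A = 0. -/
open Matrix

theorem gradF1_eq_zero_iff_A_eq_zero {n p : ℕ}
    (X G : Matrix (Fin n) (Fin p) ℝ) (hX : Xᵀ * X = 1) :
    G - X * Gᵀ * X = 0 ↔ G * Xᵀ - X * Gᵀ = 0 := by
  rw [sub_eq_zero, sub_eq_zero]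
  constructor
  · intro h
    have hT : Gᵀ = Xᵀ * G * Xᵀ := by
      calc Gᵀ = (X * Gᵀ * X)ᵀ := by rw [← h]
        _ = Xᵀ * G * Xᵀ := by simp [transpose_mul, Matrix.mul_assoc]
    have h2 : Gᵀ * X = Xᵀ * G := by
      calc Gᵀ * X = Xᵀ * G * Xᵀ * X := by rw [← hT]
        _ = Xᵀ * G * (Xᵀ * X) := by rw [Matrix.mul_assoc]
        _ = Xᵀ * G := by rw [hX, Matrix.mul_one]
    calc G * Xᵀ = X * Gᵀ * X * Xᵀ := by rw [← h]
      _ = X * (Gᵀ * X) * Xᵀ := by rw [Matrix.mul_assoc X]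
      _ = X * (Xᵀ * G) * Xᵀ := by rw [h2]
      _ = X * (Xᵀ * G * Xᵀ) := by simp only [Matrix.mul_assoc]
      _ = X * Gᵀ := by rw [← hT]
  · intro h
    calc G = G * (Xᵀ * X) := by rw [hX, Matrix.mul_one]
      _ = G * Xᵀ * X := by rw [Matrix.mul_assoc]
      _ = X * Gᵀ * X := by rw [h]
end

section
/- Let X ∈ ℝ^{n×p} with X^T X = I and G ∈ ℝ^{n×p}. Define H := α (G X^T − X G^T) X + β (I − X X^T) G with α > 0 and β ≥ 0, and A := G X^T − X G^T. Then Tr[G^T H] ≥ (α/2) ‖A‖_F². In particular, if A ≠ 0 then −H is a descent direction: Tr[G^T (−H)] ≤ −(α/2)‖A‖_F² < 0. -/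
open Matrix

noncomputable def frobNorm {n p : ℕ} (A : Matrix (Fin n) (Fin p) ℝ) : ℝ :=
  Real.sqrt (Matrix.trace (Aᵀ * A))

lemma trace_tmul_self_nonneg {m k : ℕ} (M : Matrix (Fin m) (Fin k) ℝ) :
    0 ≤ Matrix.trace (Mᵀ * M) := by
  have h : Matrix.trace (Mᵀ * M) = ∑ j, ∑ i, (M i j)^2 := by
    simp [Matrix.trace, Matrix.diag, Matrix.mul_apply, sq]
  rw [h]; positivity

lemma trace_tmul_self_pos {m k : ℕ} (M : Matrix (Fin m) (Fin k) ℝ) (hM : M ≠ 0) :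
    0 < Matrix.trace (Mᵀ * M) := by
  have h : Matrix.trace (Mᵀ * M) = ∑ j, ∑ i, (M i j)^2 := by
    simp [Matrix.trace, Matrix.diag, Matrix.mul_apply, sq]
  rcases lt_or_eq_of_le (trace_tmul_self_nonneg M) with h' | h'
  · exact h'
  · exfalso; apply hM
    ext i j
    have hz : ∑ j, ∑ i, (M i j)^2 = 0 := by rw [← h, ← h']
    have h1 := (Finset.sum_eq_zero_iff_of_nonneg
      (fun j _ => Finset.sum_nonneg fun i _ => sq_nonneg (M i j))).mp hz j (Finset.mem_univ j)
    have h2 := (Finset.sum_eq_zero_iff_of_nonneg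
      (fun i _ => sq_nonneg (M i j))).mp h1 i (Finset.mem_univ i)
    simpa using sq_eq_zero_iff.mp h2

lemma trace_G_AX {n p : ℕ} (X G : Matrix (Fin n) (Fin p) ℝ) (hX : Xᵀ * X = 1) :
    Matrix.trace (Gᵀ * ((G * Xᵀ - X * Gᵀ) * X)) =
      Matrix.trace (Gᵀ * G) - Matrix.trace ((Xᵀ * G) * (Xᵀ * G)) := by
  rw [Matrix.sub_mul, Matrix.mul_sub, trace_sub, Matrix.mul_assoc G Xᵀ X, hX, Matrix.mul_one]
  congr 1
  rw [← Matrix.trace_transpose ((Xᵀ * G) * (Xᵀ * G))]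
  simp [Matrix.transpose_mul, Matrix.mul_assoc]

lemma trace_AtA {n p : ℕ} (X G : Matrix (Fin n) (Fin p) ℝ) (hX : Xᵀ * X = 1) :
    Matrix.trace ((G * Xᵀ - X * Gᵀ)ᵀ * (G * Xᵀ - X * Gᵀ)) =
      2 * (Matrix.trace (Gᵀ * G) - Matrix.trace ((Xᵀ * G) * (Xᵀ * G))) := by
  simp only [Matrix.transpose_sub, Matrix.transpose_mul, Matrix.transpose_transpose,
    Matrix.sub_mul, Matrix.mul_sub, trace_sub, Matrix.mul_assoc]
  have h1 : Matrix.trace (X * (Gᵀ * (G * Xᵀ))) = Matrix.trace (Gᵀ * G) := by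
    rw [trace_mul_comm]
    simp only [Matrix.mul_assoc]
    rw [hX, Matrix.mul_one]
  have h2 : Matrix.trace (G * (Xᵀ * (G * Xᵀ))) = Matrix.trace ((Xᵀ * G) * (Xᵀ * G)) := by
    rw [trace_mul_comm]
    simp only [Matrix.mul_assoc]
  have h3 : Matrix.trace (G * (Xᵀ * (X * Gᵀ))) = Matrix.trace (Gᵀ * G) := by
    rw [← Matrix.mul_assoc Xᵀ X, hX, Matrix.one_mul, trace_mul_comm]
  have h4 : Matrix.trace (X * (Gᵀ * (X * Gᵀ))) = Matrix.trace ((Xᵀ * G) * (Xᵀ * G)) := by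
    rw [← Matrix.trace_transpose ((Xᵀ * G) * (Xᵀ * G))]
    simp only [Matrix.transpose_mul, Matrix.transpose_transpose, Matrix.mul_assoc]
    rw [trace_mul_comm]
    simp only [Matrix.mul_assoc]
  simp only [Matrix.mul_assoc] at h2 h4
  rw [h1, h2, h3, h4]
  ring

lemma trace_G_PG {n p : ℕ} (X G : Matrix (Fin n) (Fin p) ℝ) (hX : Xᵀ * X = 1) :
    Matrix.trace (Gᵀ * ((1 - X * Xᵀ) * G)) =
      Matrix.trace (((1 - X * Xᵀ) * G)ᵀ * ((1 - X * Xᵀ) * G)) := by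
  have hP : (1 - X * Xᵀ)ᵀ = (1 - X * Xᵀ) := by
    simp [Matrix.transpose_sub, Matrix.transpose_mul]
  have hPP : (1 - X * Xᵀ) * (1 - X * Xᵀ) = (1 - X * Xᵀ) := by
    simp only [Matrix.mul_sub, Matrix.sub_mul, Matrix.one_mul, Matrix.mul_one]
    rw [Matrix.mul_assoc X Xᵀ (X * Xᵀ), ← Matrix.mul_assoc Xᵀ X Xᵀ, hX, Matrix.one_mul]
    abel
  rw [Matrix.transpose_mul, hP, Matrix.mul_assoc,
    ← Matrix.mul_assoc (1 - X * Xᵀ) (1 - X * Xᵀ) G, hPP]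

theorem descent_direction {n p : ℕ}
    (X G : Matrix (Fin n) (Fin p) ℝ) (hX : Xᵀ * X = 1)
    (α β : ℝ) (hα : 0 < α) (hβ : 0 ≤ β)
    (A : Matrix (Fin n) (Fin n) ℝ) (hA : A = G * Xᵀ - X * Gᵀ)
    (H : Matrix (Fin n) (Fin p) ℝ)
    (hH : H = α • (A * X) + β • ((1 - X * Xᵀ) * G)) :
    Matrix.trace (Gᵀ * H) ≥ (α / 2) * frobNorm A ^ 2 ∧
      (A ≠ 0 →
        Matrix.trace (Gᵀ * (-H)) ≤ -(α / 2) * frobNorm A ^ 2 ∧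
          -(α / 2) * frobNorm A ^ 2 < 0) := by
  have hfrob : frobNorm A ^ 2 = Matrix.trace (Aᵀ * A) := by
    rw [frobNorm, Real.sq_sqrt (trace_tmul_self_nonneg A)]
  have hAtA : Matrix.trace (Aᵀ * A) =
      2 * (Matrix.trace (Gᵀ * G) - Matrix.trace ((Xᵀ * G) * (Xᵀ * G))) := by
    rw [hA]; exact trace_AtA X G hX
  have hGH : Matrix.trace (Gᵀ * H) =
      α * (Matrix.trace (Gᵀ * G) - Matrix.trace ((Xᵀ * G) * (Xᵀ * G)))
        + β * Matrix.trace (Gᵀ * ((1 - X * Xᵀ) * G)) := by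
    rw [hH, hA, Matrix.mul_add, trace_add, Matrix.mul_smul, Matrix.mul_smul,
      trace_smul, trace_smul, trace_G_AX X G hX]
    simp [smul_eq_mul]
  have hq : 0 ≤ Matrix.trace (Gᵀ * ((1 - X * Xᵀ) * G)) := by
    rw [trace_G_PG X G hX]
    exact trace_tmul_self_nonneg _
  have hmain : Matrix.trace (Gᵀ * H) ≥ (α / 2) * frobNorm A ^ 2 := by
    rw [hfrob, hAtA, hGH]
    nlinarith [mul_nonneg hβ hq]
  refine ⟨hmain, fun hAne => ?_⟩
  have hpos : 0 < Matrix.trace (Aᵀ * A) := trace_tmul_self_pos A hAne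
  have hlt : -(α / 2) * frobNorm A ^ 2 < 0 := by
    rw [hfrob]; nlinarith
  refine ⟨?_, hlt⟩
  rw [Matrix.mul_neg, trace_neg]
  linarith [hmain]
end

section
/- Let X ∈ ℝ^{n×p} have rank p with SVD X = U Σ V^T (U ∈ ℝ^{n×n}, V ∈ ℝ^{p×p} orthogonal, Σ with strictly positive diagonal singular values σ₁ ≥ ... ≥ σ_p > 0). Then Q* := U I_{n,p} V^T minimizes ‖X − Q‖_F² over all Q ∈ St(n,p), i.e., for every Q with Q^T Q = I_p, ‖X − Q*‖_F ≤ ‖X − Q‖_F. -/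
open Matrix

theorem projection_is_minimizer {n p : ℕ}
    (X : Matrix (Fin n) (Fin p) ℝ) (hrank : X.rank = p)
    (U : Matrix (Fin n) (Fin n) ℝ) (V : Matrix (Fin p) (Fin p) ℝ)
    (S : Matrix (Fin n) (Fin p) ℝ)
    (hU : Uᵀ * U = 1) (hV : Vᵀ * V = 1)
    (σ : Fin p → ℝ) (hσpos : ∀ i, 0 < σ i)
    (hσmono : ∀ i j : Fin p, i ≤ j → σ j ≤ σ i)
    (hS : ∀ i j, S i j = if (i : ℕ) = (j : ℕ) then σ j else 0)
    (hSVD : X = U * S * Vᵀ)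
    (Inp : Matrix (Fin n) (Fin p) ℝ)
    (hInp : ∀ i j, Inp i j = if (i : ℕ) = (j : ℕ) then 1 else 0)
    (Q : Matrix (Fin n) (Fin p) ℝ) (hQ : Qᵀ * Q = 1) :
    frobNorm (X - U * Inp * Vᵀ) ≤ frobNorm (X - Q) := by
  have hpn : p ≤ n := by
    have := Matrix.rank_le_card_height X
    simpa [hrank] using this
  set e : Fin p → Fin n := fun j => ⟨j, lt_of_lt_of_le j.2 hpn⟩ with he
  have htrS : ∀ M : Matrix (Fin p) (Fin n) ℝ,
      Matrix.trace (M * S) = ∑ j, M j (e j) * σ j := by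
    intro M
    rw [Matrix.trace]
    apply Finset.sum_congr rfl
    intro j _
    simp only [Matrix.diag, Matrix.mul_apply]
    rw [Finset.sum_eq_single (e j)]
    · rw [hS]; simp [he]
    · intro k _ hk
      rw [hS]
      have : ¬ ((k : ℕ) = (j : ℕ)) := by
        intro h; apply hk; apply Fin.ext; simp [he, h]
      simp [this]
    · intro h; exact absurd (Finset.mem_univ _) h
  have hUUT : U * Uᵀ = 1 := mul_eq_one_comm.mp hU
  have hVVT : V * Vᵀ = 1 := mul_eq_one_comm.mp hV
  set M : Matrix (Fin p) (Fin n) ℝ := Vᵀ * Qᵀ * U with hM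
  have hMMT : M * Mᵀ = 1 := by
    rw [hM]
    simp only [Matrix.transpose_mul, Matrix.transpose_transpose, Matrix.mul_assoc]
    rw [← Matrix.mul_assoc U Uᵀ, hUUT, Matrix.one_mul, ← Matrix.mul_assoc Qᵀ Q, hQ,
      Matrix.one_mul, hV]
  have hMle : ∀ j k, M j k ≤ 1 := by
    intro j k
    have h1 : ∑ l, M j l * M j l = 1 := by
      have := congrArg (fun A => A j j) hMMT
      simpa [Matrix.mul_apply, Matrix.one_apply] using this
    have h2 : M j k * M j k ≤ 1 := by
      rw [← h1]
      exact Finset.single_le_sum (f := fun l => M j l * M j l)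
        (fun l _ => mul_self_nonneg _) (Finset.mem_univ k)
    nlinarith
  have htrQ : Matrix.trace (Qᵀ * X) ≤ ∑ j, σ j := by
    have h1 : Matrix.trace (Qᵀ * X) = Matrix.trace (M * S) := by
      rw [hSVD, hM]
      rw [show Qᵀ * (U * S * Vᵀ) = (Qᵀ * U * S) * Vᵀ by
        simp only [Matrix.mul_assoc]]
      rw [Matrix.trace_mul_comm (Qᵀ * U * S) Vᵀ]
      congr 1
      simp only [Matrix.mul_assoc]
    rw [h1, htrS]
    apply Finset.sum_le_sum
    intro j _
    calc M j (e j) * σ j ≤ 1 * σ j :=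
          mul_le_mul_of_nonneg_right (hMle j (e j)) (hσpos j).le
      _ = σ j := one_mul _
  set Qs : Matrix (Fin n) (Fin p) ℝ := U * Inp * Vᵀ with hQs
  have htrQs : Matrix.trace (Qsᵀ * X) = ∑ j, σ j := by
    have h1 : Qsᵀ * X = V * Inpᵀ * S * Vᵀ := by
      rw [hQs, hSVD]
      simp only [Matrix.transpose_mul, Matrix.transpose_transpose, Matrix.mul_assoc]
      rw [← Matrix.mul_assoc Uᵀ U, hU, Matrix.one_mul]
    rw [h1, Matrix.trace_mul_comm (V * Inpᵀ * S) Vᵀ]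
    have h2 : Vᵀ * (V * Inpᵀ * S) = Inpᵀ * S := by
      simp only [Matrix.mul_assoc]
      rw [← Matrix.mul_assoc Vᵀ V, hV, Matrix.one_mul]
    rw [h2, htrS]
    apply Finset.sum_congr rfl
    intro j _
    have : Inpᵀ j (e j) = 1 := by
      rw [Matrix.transpose_apply, hInp]; simp [he]
    rw [this, one_mul]
  have hInpT : Inpᵀ * Inp = 1 := by
    ext i j
    simp only [Matrix.mul_apply, Matrix.transpose_apply]
    rw [Finset.sum_eq_single (e i)]
    · rw [hInp, hInp]
      by_cases h : i = j
      · simp [he, h, Matrix.one_apply]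
      · have : ¬ ((e i : ℕ) = (j : ℕ)) := by
          simp [he]; intro hh; exact h (Fin.ext hh)
        simp [he, this, Matrix.one_apply, h]
        exact fun hh => h (Fin.ext hh)
    · intro k _ hk
      rw [hInp]
      have : ¬ ((k : ℕ) = (i : ℕ)) := by
        intro h; apply hk; apply Fin.ext; simp [he, h]
      simp [this]
    · intro h; exact absurd (Finset.mem_univ _) h
  have hQsQs : Qsᵀ * Qs = 1 := by
    rw [hQs]
    simp only [Matrix.transpose_mul, Matrix.transpose_transpose, Matrix.mul_assoc]
    rw [← Matrix.mul_assoc Uᵀ U, hU, Matrix.one_mul, ← Matrix.mul_assoc Inpᵀ Inp, hInpT,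
      Matrix.one_mul, hVVT]
  have expand : ∀ B : Matrix (Fin n) (Fin p) ℝ, Bᵀ * B = 1 →
      Matrix.trace ((X - B)ᵀ * (X - B)) =
        Matrix.trace (Xᵀ * X) - 2 * Matrix.trace (Bᵀ * X) + (p : ℝ) := by
    intro B hB
    have h1 : (X - B)ᵀ * (X - B) = Xᵀ * X - Xᵀ * B - Bᵀ * X + Bᵀ * B := by
      rw [Matrix.transpose_sub, Matrix.sub_mul, Matrix.mul_sub, Matrix.mul_sub]
      abel
    rw [h1, hB]
    have h2 : Matrix.trace (Xᵀ * B) = Matrix.trace (Bᵀ * X) := by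
      rw [← Matrix.trace_transpose (Xᵀ * B)]
      simp [Matrix.transpose_mul]
    simp only [Matrix.trace_add, Matrix.trace_sub, h2, Matrix.trace_one]
    simp [Fintype.card_fin]
    ring
  unfold frobNorm
  apply Real.sqrt_le_sqrt
  rw [expand Qs hQsQs, expand Q hQ]
  linarith [htrQ, htrQs.le, htrQs.ge]
end
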